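/- Let γ be a probability measure on (E,ℰ), w a bounded, everywhere-positive measurable function with γ(w) > 0, ρ the measure ρ(dx) = w(x)γ(dx) with mass Z = γ(w) and normalization μ = ρ/Z. Let X¹,…,X^N be i.i.d. draws from γ and set Z^N := N^{-1} ∑_n w(Xⁿ) and μ^N(φ) := ∑_n w(Xⁿ)φ(Xⁿ) / ∑_n w(Xⁿ). If additionally w ≥ β for some β > 0, then there exists C < ∞ such that |E[μ^N(φ)] − μ(φ)| ≤ C‖φ‖/N for all N > 0 and all bounded measurable φ. -/

import Mathlib

open MeasureTheory


section Aux

lemma bdd_integrable' {α : Type*} [MeasurableSpace α] (μ : Measure α) [IsFiniteMeasure μ]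
    {f : α → ℝ} (hf : Measurable f) {C : ℝ} (h : ∀ x, |f x| ≤ C) : Integrable f μ :=
  ⟨hf.aestronglyMeasurable, MeasureTheory.HasFiniteIntegral.of_bounded (C := C) (ae_of_all _ h)⟩

variable {E : Type*} [MeasurableSpace E] (γ : Measure E) [IsProbabilityMeasure γ]

lemma pi_prod' (N : ℕ) (f : Fin N → E → ℝ) :
    ∫ x : Fin N → E, ∏ i, f i (x i) ∂(Measure.pi fun _ => γ) = ∏ i, ∫ y, f i y ∂γ := by
  letI : MeasureSpace E := ⟨γ⟩
  haveI : SigmaFinite (volume : Measure E) := inferInstanceAs (SigmaFinite γ)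
  exact MeasureTheory.integral_fintype_prod_eq_prod f

lemma pi_eval' {N : ℕ} (g : E → ℝ) (n : Fin N) :
    ∫ x : Fin N → E, g (x n) ∂(Measure.pi fun _ => γ) = ∫ y, g y ∂γ := by
  have h := pi_prod' γ N (fun i => if i = n then g else fun _ => 1)
  have h1 : ∀ x : Fin N → E,
      (∏ i, (if i = n then g else fun _ => (1:ℝ)) (x i)) = g (x n) := by
    intro x
    rw [Finset.prod_eq_single n]
    · simp
    · intro b _ hb; simp [hb]
    · simp
  have h2 : (∏ i : Fin N, ∫ y, (if i = n then g else fun _ => (1:ℝ)) y ∂γ)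
      = ∫ y, g y ∂γ := by
    rw [Finset.prod_eq_single n]
    · simp
    · intro b _ hb; simp [hb]
    · simp
  simp only [h1] at h
  rw [h, h2]

lemma pi_pair' {N : ℕ} (f g : E → ℝ) {m n : Fin N} (hmn : m ≠ n) :
    ∫ x : Fin N → E, f (x m) * g (x n) ∂(Measure.pi fun _ => γ)
      = (∫ y, f y ∂γ) * (∫ y, g y ∂γ) := by
  have h := pi_prod' γ N (fun i => if i = m then f else if i = n then g else fun _ => 1)
  have h1 : ∀ x : Fin N → E,
      (∏ i, (if i = m then f else if i = n then g else fun _ => (1:ℝ)) (x i))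
        = f (x m) * g (x n) := by
    intro x
    rw [← Finset.prod_subset (Finset.subset_univ ({m, n} : Finset (Fin N)))
      (by intro i _ hi
          simp only [Finset.mem_insert, Finset.mem_singleton, not_or] at hi
          simp [hi.1, hi.2]),
      Finset.prod_pair hmn]
    simp [hmn, Ne.symm hmn]
  have h2 : (∏ i : Fin N, ∫ y, (if i = m then f else if i = n then g else fun _ => (1:ℝ)) y ∂γ)
      = (∫ y, f y ∂γ) * (∫ y, g y ∂γ) := by
    rw [← Finset.prod_subset (Finset.subset_univ ({m, n} : Finset (Fin N)))
      (by intro i _ hi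
          simp only [Finset.mem_insert, Finset.mem_singleton, not_or] at hi
          simp [hi.1, hi.2]),
      Finset.prod_pair hmn]
    simp [hmn, Ne.symm hmn]
  simp only [h1] at h
  rw [h, h2]

lemma pi_sum_sq' {N : ℕ} {f : E → ℝ} (hf : Measurable f) {B : ℝ} (hB0 : 0 ≤ B)
    (hB : ∀ y, |f y| ≤ B) (h0 : ∫ y, f y ∂γ = 0) :
    ∫ x : Fin N → E, (∑ n, f (x n))^2 ∂(Measure.pi fun _ => γ) ≤ N * B^2 := by
  set π : Measure (Fin N → E) := Measure.pi fun _ => γ with hπ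
  haveI : IsProbabilityMeasure π := by rw [hπ]; infer_instance
  have hint : ∀ m n : Fin N, Integrable (fun x : Fin N → E => f (x m) * f (x n)) π := by
    intro m n
    refine bdd_integrable' π (((hf.comp (measurable_pi_apply m))).mul
      (hf.comp (measurable_pi_apply n))) (C := B * B) (fun x => ?_)
    rw [abs_mul]
    exact mul_le_mul (hB _) (hB _) (abs_nonneg _) hB0
  have hexp : ∀ x : Fin N → E,
      (∑ n, f (x n))^2 = ∑ m : Fin N, ∑ n : Fin N, f (x m) * f (x n) := by
    intro x; rw [sq, Finset.sum_mul_sum]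
  simp_rw [hexp]
  rw [integral_finset_sum _ (fun m _ => integrable_finset_sum _ (fun n _ => hint m n))]
  have hterm : ∀ m n : Fin N, ∫ x, f (x m) * f (x n) ∂π
      = if m = n then ∫ y, f y ^ 2 ∂γ else 0 := by
    intro m n
    by_cases hmn : m = n
    · subst hmn
      rw [if_pos rfl, hπ]
      have h := pi_eval' γ (fun y => f y ^ 2) m
      simpa [pow_two] using h
    · rw [if_neg hmn, hπ, pi_pair' γ f f hmn, h0, mul_zero]
  have hsum : ∀ m : Fin N, ∫ x, ∑ n : Fin N, f (x m) * f (x n) ∂π = ∫ y, f y ^ 2 ∂γ := by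
    intro m
    rw [integral_finset_sum _ (fun n _ => hint m n)]
    simp_rw [hterm m]
    simp
  simp_rw [hsum]
  have hsq : ∫ y, f y ^ 2 ∂γ ≤ B ^ 2 := by
    have h1 : ∀ y, f y ^ 2 ≤ B ^ 2 := fun y => by
      rw [← sq_abs]; exact pow_le_pow_left₀ (abs_nonneg _) (hB y) 2
    calc ∫ y, f y ^ 2 ∂γ ≤ ∫ _, B ^ 2 ∂γ :=
          integral_mono (bdd_integrable' γ (hf.pow_const 2)
            (C := B^2) (fun y => by rw [abs_of_nonneg (sq_nonneg _)]; exact h1 y))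
            (integrable_const _) h1
      _ = B ^ 2 := by simp
  calc (∑ _m : Fin N, ∫ y, f y ^ 2 ∂γ) = N * ∫ y, f y ^ 2 ∂γ := by
        rw [Finset.sum_const]; simp [nsmul_eq_mul]
    _ ≤ N * B ^ 2 := mul_le_mul_of_nonneg_left hsq (by positivity)

lemma amgm' {M : ℝ} (hM : 0 < M) (a b : ℝ) : |a * b| ≤ (M⁻¹ * a^2 + M * b^2) / 2 := by
  have h2 : 2 * M * (|a| * |b|) ≤ a^2 + M^2 * b^2 := by
    nlinarith [sq_nonneg (|a| - M * |b|), sq_abs a, sq_abs b, abs_nonneg a, abs_nonneg b]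
  calc |a * b| = |a| * |b| := abs_mul a b
    _ ≤ (a^2 + M^2 * b^2) / (2 * M) := by
        rw [le_div_iff₀ (by positivity)]
        nlinarith [h2]
    _ = (M⁻¹ * a^2 + M * b^2) / 2 := by
        field_simp

end Aux

set_option maxHeartbeats 1000000 in

/-- Self-normalized importance sampling bias bound: with i.i.d. draws from `γ` and a bounded
measurable weight `w ≥ β > 0`, the self-normalized estimator
`μ^N(φ) = ∑ w(Xⁿ)φ(Xⁿ) / ∑ w(Xⁿ)` of `μ(φ) = γ(wφ)/γ(w)` has bias at most `C‖φ‖/N`. -/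
theorem stmt17
    {Ω E : Type*} [MeasurableSpace Ω] [MeasurableSpace E]
    (P : Measure Ω) [IsProbabilityMeasure P]
    (γ : Measure E) [IsProbabilityMeasure γ]
    (w : E → ℝ) (hwmeas : Measurable w)
    (Mw β : ℝ) (hβ : 0 < β) (hwl : ∀ x, β ≤ w x) (hwu : ∀ x, w x ≤ Mw)
    (X : (N : ℕ) → Fin N → Ω → E)
    (hXmeas : ∀ N n, Measurable (X N n))
    (hlaw : ∀ N : ℕ, Measure.map (fun ω (n : Fin N) => X N n ω) P
      = Measure.pi (fun _ : Fin N => γ)) :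
    ∃ C : ℝ, ∀ N : ℕ, 0 < N → ∀ φ : E → ℝ, Measurable φ → ∀ M : ℝ, (∀ x, |φ x| ≤ M) →
      |(∫ ω, (∑ n : Fin N, w (X N n ω) * φ (X N n ω)) / (∑ n : Fin N, w (X N n ω)) ∂P)
          - (∫ x, w x * φ x ∂γ) / (∫ x, w x ∂γ)| ≤ C * M / N := by
  have hE : Nonempty E := by
    by_contra h
    have h1 : (Set.univ : Set E) = ∅ := Set.univ_eq_empty_iff.mpr (not_nonempty_iff.mp h)
    have h2 := measure_univ (μ := γ)
    rw [h1] at h2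
    simp at h2
  obtain ⟨x₀⟩ := hE
  have hwpos : ∀ x, 0 < w x := fun x => lt_of_lt_of_le hβ (hwl x)
  have hwabs : ∀ x, |w x| ≤ Mw := fun x =>
    abs_le.mpr ⟨by nlinarith [hwl x, hwu x₀, hwl x₀], hwu x⟩
  have hMwpos : 0 < Mw := lt_of_lt_of_le hβ (le_trans (hwl x₀) (hwu x₀))
  have hwint : Integrable w γ := bdd_integrable' γ hwmeas hwabs
  set Z := ∫ x, w x ∂γ with hZdef
  have hβZ : β ≤ Z := by
    calc β = ∫ _, β ∂γ := by simp
      _ ≤ Z := integral_mono (integrable_const β) hwint hwl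
  have hZMw : Z ≤ Mw := by
    calc Z ≤ ∫ _, Mw ∂γ := integral_mono hwint (integrable_const Mw) hwu
      _ = Mw := by simp
  have hZpos : 0 < Z := lt_of_lt_of_le hβ hβZ
  clear_value Z
  refine ⟨5 * Mw^2 / (2 * β^2), ?_⟩
  intro N hN φ hφ M hM
  have hM0 : 0 ≤ M := le_trans (abs_nonneg _) (hM x₀)
  rcases eq_or_lt_of_le hM0 with hM0' | hMpos
  · have hφ0 : ∀ x, φ x = 0 := fun x =>
      abs_eq_zero.mp (le_antisymm (hM0' ▸ hM x) (abs_nonneg _))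
    have : M = 0 := hM0'.symm
    simp [hφ0, this]
  have hNpos : (0:ℝ) < N := Nat.cast_pos.mpr hN
  set π : Measure (Fin N → E) := Measure.pi (fun _ : Fin N => γ) with hπ
  haveI : IsProbabilityMeasure π := by rw [hπ]; infer_instance
  -- transport to the product space
  have hmp : Measurable (fun ω (n : Fin N) => X N n ω) := measurable_pi_lambda _ (hXmeas N)
  set G : (Fin N → E) → ℝ :=
    fun x => (∑ n : Fin N, w (x n) * φ (x n)) / (∑ n : Fin N, w (x n)) with hGdef
  have hGmeas : Measurable G :=
    (Finset.measurable_sum _ fun n _ =>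
      (hwmeas.comp (measurable_pi_apply n)).mul (hφ.comp (measurable_pi_apply n))).div
      (Finset.measurable_sum _ fun n _ => hwmeas.comp (measurable_pi_apply n))
  have htrans : (∫ ω, (∑ n : Fin N, w (X N n ω) * φ (X N n ω))
      / (∑ n : Fin N, w (X N n ω)) ∂P) = ∫ x, G x ∂π := by
    rw [hπ, ← hlaw N, integral_map hmp.aemeasurable hGmeas.aestronglyMeasurable]
  rw [htrans]
  -- basic objects
  have hwφint : Integrable (fun x => w x * φ x) γ :=
    bdd_integrable' γ (hwmeas.mul hφ) (C := Mw * M) (fun x => by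
      rw [abs_mul]
      exact mul_le_mul (hwabs x) (hM x) (abs_nonneg _) (by positivity))
  set μφ := (∫ x, w x * φ x ∂γ) / Z with hμφdef
  have hμφbd : |μφ| ≤ M := by
    rw [hμφdef, abs_div, abs_of_pos hZpos, div_le_iff₀ hZpos]
    have habs : |∫ x, w x * φ x ∂γ| ≤ ∫ x, |w x * φ x| ∂γ := by
      have h := norm_integral_le_integral_norm (μ := γ) (fun x => w x * φ x)
      simpa only [Real.norm_eq_abs] using h
    calc |∫ x, w x * φ x ∂γ| ≤ ∫ x, |w x * φ x| ∂γ := habs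
      _ ≤ ∫ x, M * w x ∂γ := by
          refine integral_mono hwφint.abs (hwint.const_mul M) (fun x => ?_)
          rw [abs_mul, abs_of_pos (hwpos x)]
          calc w x * |φ x| ≤ w x * M := mul_le_mul_of_nonneg_left (hM x) (hwpos x).le
            _ = M * w x := mul_comm _ _
      _ = M * Z := by rw [integral_const_mul, ← hZdef]
  clear_value μφ
  set ψ : E → ℝ := fun y => w y * φ y - μφ * w y with hψdef
  have hψmeas : Measurable ψ := (hwmeas.mul hφ).sub (hwmeas.const_mul μφ)
  have hψbd : ∀ y, |ψ y| ≤ 2 * (M * Mw) := by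
    intro y
    have h1 : |w y * φ y| ≤ Mw * M := by
      rw [abs_mul, abs_of_pos (hwpos y)]
      exact mul_le_mul (hwu y) (hM y) (abs_nonneg _) (by positivity)
    have h2 : |μφ * w y| ≤ M * Mw := by
      rw [abs_mul, abs_of_pos (hwpos y)]
      exact mul_le_mul hμφbd (hwu y) (hwpos y).le hM0
    calc |ψ y| ≤ |w y * φ y| + |μφ * w y| := abs_sub _ _
      _ ≤ Mw * M + M * Mw := add_le_add h1 h2
      _ = 2 * (M * Mw) := by ring
  have hψ0 : ∫ y, ψ y ∂γ = 0 := by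
    have hμZ : μφ * Z = ∫ x, w x * φ x ∂γ := by
      rw [hμφdef]; field_simp
    rw [hψdef]
    rw [integral_sub hwφint (hwint.const_mul μφ), integral_const_mul, ← hZdef, hμZ, sub_self]
  set χ : E → ℝ := fun y => Z - w y with hχdef
  have hχmeas : Measurable χ := measurable_const.sub hwmeas
  have hχbd : ∀ y, |χ y| ≤ Mw := fun y => abs_le.mpr
    ⟨by simp only [hχdef]; nlinarith [hwu y, hβZ], by simp only [hχdef]; nlinarith [hwl y, hZMw]⟩
  have hχ0 : ∫ y, χ y ∂γ = 0 := by
    rw [hχdef, integral_sub (integrable_const Z) hwint, integral_const]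
    simp [hZdef]
  set S : (Fin N → E) → ℝ := fun x => ∑ n, w (x n) with hSdef
  set T : (Fin N → E) → ℝ := fun x => ∑ n, ψ (x n) with hTdef
  set U : (Fin N → E) → ℝ := fun x => ∑ n, χ (x n) with hUdef
  have hSmeas : Measurable S := Finset.measurable_sum _ fun n _ => hwmeas.comp (measurable_pi_apply n)
  have hTmeas : Measurable T := Finset.measurable_sum _ fun n _ => hψmeas.comp (measurable_pi_apply n)
  have hUmeas : Measurable U := Finset.measurable_sum _ fun n _ => hχmeas.comp (measurable_pi_apply n)
  have hU : ∀ x, U x = (N:ℝ) * Z - S x := by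
    intro x
    simp only [hUdef, hχdef, hSdef, Finset.sum_sub_distrib, Finset.sum_const,
      Finset.card_univ, Fintype.card_fin, nsmul_eq_mul]
  have hSlb : ∀ x, (N:ℝ) * β ≤ S x := by
    intro x
    calc (N:ℝ) * β = ∑ _n : Fin N, β := by
          rw [Finset.sum_const, Finset.card_univ, Fintype.card_fin, nsmul_eq_mul]
      _ ≤ S x := Finset.sum_le_sum (fun n _ => hwl _)
  have hSpos : ∀ x, 0 < S x := fun x => lt_of_lt_of_le (by positivity) (hSlb x)
  have hNZpos : 0 < (N:ℝ) * Z := by positivity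
  have hTbd : ∀ x, |T x| ≤ (N:ℝ) * (2 * (M * Mw)) := by
    intro x
    calc |T x| ≤ ∑ n, |ψ (x n)| := Finset.abs_sum_le_sum_abs _ _
      _ ≤ ∑ _n : Fin N, 2 * (M * Mw) := Finset.sum_le_sum (fun n _ => hψbd _)
      _ = (N:ℝ) * (2 * (M * Mw)) := by
          rw [Finset.sum_const, Finset.card_univ, Fintype.card_fin, nsmul_eq_mul]
  have hUbd : ∀ x, |U x| ≤ (N:ℝ) * Mw := by
    intro x
    calc |U x| ≤ ∑ n, |χ (x n)| := Finset.abs_sum_le_sum_abs _ _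
      _ ≤ ∑ _n : Fin N, Mw := Finset.sum_le_sum (fun n _ => hχbd _)
      _ = (N:ℝ) * Mw := by
          rw [Finset.sum_const, Finset.card_univ, Fintype.card_fin, nsmul_eq_mul]
  have hTint : Integrable T π := bdd_integrable' π hTmeas hTbd
  have hT0 : ∫ x, T x ∂π = 0 := by
    have h1 : ∀ n : Fin N, Integrable (fun x : Fin N → E => ψ (x n)) π :=
      fun n => bdd_integrable' π (hψmeas.comp (measurable_pi_apply n)) (fun x => hψbd _)
    have h2 : ∫ x, T x ∂π = ∑ n : Fin N, ∫ x : Fin N → E, ψ (x n) ∂π := by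
      rw [hTdef]
      exact integral_finset_sum Finset.univ (fun n _ => h1 n)
    have h3 : ∀ n : Fin N, ∫ x : Fin N → E, ψ (x n) ∂π = 0 := fun n => by
      rw [hπ, pi_eval' γ ψ n]; exact hψ0
    rw [h2]
    simp [h3]
  -- pointwise decomposition
  set R : (Fin N → E) → ℝ :=
    fun x => T x * ((N:ℝ) * Z - S x) / (((N:ℝ) * Z) * S x) with hRdef
  have hid : ∀ x, G x - μφ = T x / ((N:ℝ) * Z) + R x := by
    intro x
    have hSx : S x ≠ 0 := (hSpos x).ne'
    have hNZ : (N:ℝ) * Z ≠ 0 := hNZpos.ne'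
    have hT : T x = (∑ n, w (x n) * φ (x n)) - μφ * S x := by
      simp only [hTdef, hψdef, hSdef, Finset.sum_sub_distrib, Finset.mul_sum]
    have hGx : G x = (∑ n, w (x n) * φ (x n)) / S x := rfl
    have hRx : R x = T x * ((N:ℝ) * Z - S x) / (((N:ℝ) * Z) * S x) := rfl
    rw [hRx, hGx, hT]
    field_simp
    ring
  have hGbd : ∀ x, |G x| ≤ M := by
    intro x
    have hGx : G x = (∑ n, w (x n) * φ (x n)) / S x := rfl
    rw [hGx, abs_div, abs_of_pos (hSpos x), div_le_iff₀ (hSpos x)]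
    calc |∑ n, w (x n) * φ (x n)| ≤ ∑ n, |w (x n) * φ (x n)| := Finset.abs_sum_le_sum_abs _ _
      _ ≤ ∑ n, M * w (x n) := by
          refine Finset.sum_le_sum (fun n _ => ?_)
          rw [abs_mul, abs_of_pos (hwpos _)]
          calc w (x n) * |φ (x n)| ≤ w (x n) * M :=
                mul_le_mul_of_nonneg_left (hM _) (hwpos _).le
            _ = M * w (x n) := mul_comm _ _
      _ = M * S x := by rw [← Finset.mul_sum]
  have hGint : Integrable G π := bdd_integrable' π hGmeas hGbd
  -- second moment bounds
  have hT2int : Integrable (fun x => T x ^ 2) π :=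
    bdd_integrable' π (hTmeas.pow_const 2) (C := ((N:ℝ) * (2 * (M * Mw)))^2) (fun x => by
      rw [abs_of_nonneg (sq_nonneg _), ← sq_abs]
      exact pow_le_pow_left₀ (abs_nonneg _) (hTbd x) 2)
  have hU2int : Integrable (fun x => U x ^ 2) π :=
    bdd_integrable' π (hUmeas.pow_const 2) (C := ((N:ℝ) * Mw)^2) (fun x => by
      rw [abs_of_nonneg (sq_nonneg _), ← sq_abs]
      exact pow_le_pow_left₀ (abs_nonneg _) (hUbd x) 2)
  have hT2 : ∫ x, T x ^ 2 ∂π ≤ (N:ℝ) * (2 * (M * Mw))^2 := by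
    have h := pi_sum_sq' γ (N := N) hψmeas (B := 2 * (M * Mw)) (by positivity) hψbd hψ0
    rw [hTdef, hπ]
    exact h
  have hU2 : ∫ x, U x ^ 2 ∂π ≤ (N:ℝ) * Mw^2 := by
    have h := pi_sum_sq' γ (N := N) hχmeas (B := Mw) hMwpos.le hχbd hχ0
    rw [hUdef, hπ]
    exact h
  -- the remainder bound
  set ρ : (Fin N → E) → ℝ :=
    fun x => (M⁻¹ * T x ^ 2 + M * U x ^ 2) / (2 * (((N:ℝ) * Z) * ((N:ℝ) * β))) with hρdef
  have hρint : Integrable ρ π :=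
    (((hT2int.const_mul M⁻¹).add (hU2int.const_mul M)).div_const _)
  have hRmeas : Measurable R :=
    (hTmeas.mul (measurable_const.sub hSmeas)).div (hSmeas.const_mul _)
  have hRρ : ∀ x, ‖R x‖ ≤ ρ x := by
    intro x
    have amgm : ∀ a b : ℝ, |a * b| ≤ (M⁻¹ * a^2 + M * b^2) / 2 := amgm' hMpos
    have hRx : R x = T x * ((N:ℝ) * Z - S x) / (((N:ℝ) * Z) * S x) := rfl
    rw [Real.norm_eq_abs, hRx, abs_div, abs_of_pos (mul_pos hNZpos (hSpos x))]
    calc |T x * ((N:ℝ) * Z - S x)| / (((N:ℝ) * Z) * S x)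
        ≤ ((M⁻¹ * T x ^ 2 + M * ((N:ℝ) * Z - S x) ^ 2) / 2) / (((N:ℝ) * Z) * ((N:ℝ) * β)) := by
          refine div_le_div₀ (by positivity) (amgm _ _) (by positivity) ?_
          exact mul_le_mul_of_nonneg_left (hSlb x) hNZpos.le
      _ = ρ x := by
          have hρx : ρ x = (M⁻¹ * T x ^ 2 + M * U x ^ 2)
              / (2 * (((N:ℝ) * Z) * ((N:ℝ) * β))) := rfl
          rw [hρx, hU x, div_div]
  have hRint : Integrable R π := hρint.mono' hRmeas.aestronglyMeasurable (ae_of_all _ hRρ)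
  -- assemble
  have hsplit : ∫ x, G x ∂π - μφ = ∫ x, R x ∂π := by
    have e1 : ∫ x, G x ∂π - μφ = ∫ x, (G x - μφ) ∂π := by
      rw [integral_sub hGint (integrable_const μφ), integral_const]
      simp
    rw [e1, integral_congr_ae (ae_of_all _ (fun x => hid x)),
      integral_add (hTint.div_const _) hRint, integral_div, hT0, zero_div, zero_add]
  rw [hsplit]
  have hρval : ∫ x, ρ x ∂π
      = (M⁻¹ * ∫ x, T x ^ 2 ∂π + M * ∫ x, U x ^ 2 ∂π)
        / (2 * (((N:ℝ) * Z) * ((N:ℝ) * β))) := by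
    simp only [hρdef]
    rw [integral_div, integral_add (hT2int.const_mul M⁻¹) (hU2int.const_mul M),
      integral_const_mul, integral_const_mul]
  have hnum : M⁻¹ * ∫ x, T x ^ 2 ∂π + M * ∫ x, U x ^ 2 ∂π
      ≤ 4 * (N:ℝ) * M * Mw^2 + M * ((N:ℝ) * Mw^2) := by
    have e : M⁻¹ * ((N:ℝ) * (2 * (M * Mw))^2) = 4 * (N:ℝ) * M * Mw^2 := by
      field_simp
      ring
    have h1 : M⁻¹ * ∫ x, T x ^ 2 ∂π ≤ 4 * (N:ℝ) * M * Mw^2 := by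
      rw [← e]
      exact mul_le_mul_of_nonneg_left hT2 (by positivity)
    have h2 : M * ∫ x, U x ^ 2 ∂π ≤ M * ((N:ℝ) * Mw^2) :=
      mul_le_mul_of_nonneg_left hU2 hM0
    linarith
  have harith : (4 * (N:ℝ) * M * Mw^2 + M * ((N:ℝ) * Mw^2))
      / (2 * (((N:ℝ) * Z) * ((N:ℝ) * β))) ≤ 5 * Mw^2 / (2 * β^2) * M / (N:ℝ) := by
    rw [div_le_div_iff₀ (by positivity) hNpos, div_mul_eq_mul_div, div_mul_eq_mul_div,
      le_div_iff₀ (by positivity)]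
    have hkey : 10 * (N:ℝ)^2 * M * Mw^2 * β * β ≤ 10 * (N:ℝ)^2 * M * Mw^2 * β * Z :=
      mul_le_mul_of_nonneg_left hβZ (by positivity)
    nlinarith [hkey]
  have habsR : |∫ x, R x ∂π| ≤ ∫ x, |R x| ∂π := by
    have h := norm_integral_le_integral_norm (μ := π) R
    simpa [Real.norm_eq_abs] using h
  calc |∫ x, R x ∂π| ≤ ∫ x, |R x| ∂π := habsR
    _ ≤ ∫ x, ρ x ∂π := integral_mono hRint.abs hρint (fun x => hRρ x)
    _ ≤ (4 * (N:ℝ) * M * Mw^2 + M * ((N:ℝ) * Mw^2))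
        / (2 * (((N:ℝ) * Z) * ((N:ℝ) * β))) := by
        rw [hρval]
        exact div_le_div₀ (by positivity) hnum (by positivity) le_rfl
    _ ≤ 5 * Mw^2 / (2 * β^2) * M / (N:ℝ) := harith
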